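/- For every colouring π of a finite graph G there exists a coarsest equitable colouring π' with π' ⪯ π; that is, π' is equitable, π' ⪯ π, and every equitable colouring σ with σ ⪯ π satisfies that each cell of σ is contained in a cell of π'. Moreover, π' is unique up to the order of its cells (the partition into cells is unique). -/

import Mathlib

/-- Relabelling action of a permutation on a graph: `v^g` adjacent to `w^g` iff `v` adjacent `w`. -/
def gactG {n : ℕ} (g : Equiv.Perm (Fin n)) (G : SimpleGraph (Fin n)) : SimpleGraph (Fin n) where
  Adj v w := G.Adj (g⁻¹ v) (g⁻¹ w)
  symm := ⟨by intro a b h; exact G.adj_symm h⟩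
  loopless := ⟨by intro a h; exact G.irrefl h⟩

/-- Relabelling action of a permutation on a colouring. -/
def gactC {n : ℕ} (g : Equiv.Perm (Fin n)) (π : Fin n → ℕ) : Fin n → ℕ :=
  fun v => π (g⁻¹ v)

/-- A colouring of `V`: a function surjective onto `{1,…,k}` for some `k`. -/
def IsCol {n : ℕ} (π : Fin n → ℕ) : Prop := ∃ k, Set.range π = Set.Icc 1 k

/-- `π'` is finer than or equal to `π`. -/
def FinerC {n : ℕ} (π' π : Fin n → ℕ) : Prop := ∀ v w, π v < π w → π' v < π' w

/-- Nodes of the search tree with child rule given by the target cells `Tc`. -/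
inductive IsTNode {n : ℕ} (Tc : List (Fin n) → Set (Fin n)) : List (Fin n) → Prop
  | root : IsTNode Tc []
  | child {ν : List (Fin n)} {w : Fin n} :
      IsTNode Tc ν → w ∈ Tc ν → IsTNode Tc (ν ++ [w])

/-- The labelled graph `G^π` for a (discrete) colouring `π`, as a set of labelled edges. -/
def relabelSet {n : ℕ} (G : SimpleGraph (Fin n)) (π : Fin n → ℕ) : Set (ℕ × ℕ) :=
  {p | ∃ v w, G.Adj v w ∧ π v = p.1 ∧ π w = p.2}

/-- Equitable colouring: same-coloured vertices have equally many neighbours of each colour. -/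
def IsEquit {n : ℕ} (G : SimpleGraph (Fin n)) (π : Fin n → ℕ) : Prop :=
  ∀ v w, π v = π w → ∀ j,
    {u | G.Adj v u ∧ π u = j}.ncard = {u | G.Adj w u ∧ π u = j}.ncard

/- ### Auxiliary development -/

noncomputable section Stmt15Aux
open Classical Finset

variable {n : ℕ}

open Finset

/-- One-step relation: `v` and `w` get the same colour in some equitable refinement of `π`. -/
def Srel (G : SimpleGraph (Fin n)) (π : Fin n → ℕ) (v w : Fin n) : Prop :=
  ∃ σ : Fin n → ℕ, IsCol σ ∧ IsEquit G σ ∧ FinerC σ π ∧ σ v = σ w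

/-- Equivalence closure of `Srel`: the coarsest equitable partition's relation. -/
def Rrel (G : SimpleGraph (Fin n)) (π : Fin n → ℕ) : Fin n → Fin n → Prop :=
  Relation.EqvGen (Srel G π)

lemma Rrel_refl (G : SimpleGraph (Fin n)) (π : Fin n → ℕ) (v : Fin n) : Rrel G π v v :=
  Relation.EqvGen.refl v

lemma Rrel_symm {G : SimpleGraph (Fin n)} {π : Fin n → ℕ} {v w : Fin n}
    (h : Rrel G π v w) : Rrel G π w v := Relation.EqvGen.symm _ _ h

lemma Rrel_trans {G : SimpleGraph (Fin n)} {π : Fin n → ℕ} {v w x : Fin n}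
    (h : Rrel G π v w) (h' : Rrel G π w x) : Rrel G π v x := Relation.EqvGen.trans _ _ _ h h'

lemma Srel_pi_eq {G : SimpleGraph (Fin n)} {π : Fin n → ℕ} {v w : Fin n}
    (h : Srel G π v w) : π v = π w := by
  obtain ⟨σ, _, _, hF, hvw⟩ := h
  rcases lt_trichotomy (π v) (π w) with h1 | h1 | h1
  · exact absurd (hF v w h1) (by omega)
  · exact h1
  · exact absurd (hF w v h1) (by omega)

lemma Rrel_pi_eq {G : SimpleGraph (Fin n)} {π : Fin n → ℕ} {v w : Fin n}
    (h : Rrel G π v w) : π v = π w := by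
  induction h with
  | rel x y h => exact Srel_pi_eq h
  | refl x => rfl
  | symm x y _ ih => exact ih.symm
  | trans x y z _ _ ih1 ih2 => exact ih1.trans ih2

open Classical in
/-- The `Rrel`-class of `v` as a finset. -/
def cls (G : SimpleGraph (Fin n)) (π : Fin n → ℕ) (v : Fin n) : Finset (Fin n) :=
  Finset.univ.filter (fun u => Rrel G π v u)

lemma mem_cls_self (G : SimpleGraph (Fin n)) (π : Fin n → ℕ) (v : Fin n) : v ∈ cls G π v := by
  simp [cls, Rrel_refl]

lemma mem_cls_iff {G : SimpleGraph (Fin n)} {π : Fin n → ℕ} {v u : Fin n} :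
    u ∈ cls G π v ↔ Rrel G π v u := by simp [cls]

lemma cls_eq {G : SimpleGraph (Fin n)} {π : Fin n → ℕ} {v w : Fin n}
    (h : Rrel G π v w) : cls G π v = cls G π w := by
  ext u
  simp only [mem_cls_iff]
  exact ⟨fun h2 => Rrel_trans (Rrel_symm h) h2, fun h2 => Rrel_trans h h2⟩

/-- The minimal representative of the class of `v`. -/
def frep (G : SimpleGraph (Fin n)) (π : Fin n → ℕ) (v : Fin n) : Fin n :=
  (cls G π v).min' ⟨v, mem_cls_self G π v⟩

lemma frep_R (G : SimpleGraph (Fin n)) (π : Fin n → ℕ) (v : Fin n) : Rrel G π v (frep G π v) :=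
  mem_cls_iff.mp (Finset.min'_mem _ _)

lemma frep_eq_of_R {G : SimpleGraph (Fin n)} {π : Fin n → ℕ} {v w : Fin n}
    (h : Rrel G π v w) : frep G π v = frep G π w := by
  have hc := cls_eq h
  unfold frep
  apply le_antisymm
  · exact Finset.min'_le _ _ (by rw [hc]; exact Finset.min'_mem _ _)
  · exact Finset.min'_le _ _ (by rw [← hc]; exact Finset.min'_mem _ _)

lemma frep_idem (G : SimpleGraph (Fin n)) (π : Fin n → ℕ) (v : Fin n) :
    frep G π (frep G π v) = frep G π v :=
  (frep_eq_of_R (frep_R G π v)).symm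

lemma R_of_frep_eq {G : SimpleGraph (Fin n)} {π : Fin n → ℕ} {v w : Fin n}
    (h : frep G π v = frep G π w) : Rrel G π v w :=
  Rrel_trans (frep_R G π v) (h ▸ Rrel_symm (frep_R G π w))

/-- Lexicographic key order: first by `π`-colour, then by vertex index. -/
def ltk (π : Fin n → ℕ) (a b : Fin n) : Prop := π a < π b ∨ (π a = π b ∧ a < b)

lemma ltk_trans {π : Fin n → ℕ} {a b c : Fin n} (h1 : ltk π a b) (h2 : ltk π b c) :
    ltk π a c := by
  rcases h1 with h1 | ⟨h1, h1'⟩ <;> rcases h2 with h2 | ⟨h2, h2'⟩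
  · exact Or.inl (h1.trans h2)
  · exact Or.inl (h2 ▸ h1)
  · exact Or.inl (h1 ▸ h2)
  · exact Or.inr ⟨h1.trans h2, h1'.trans h2'⟩

lemma ltk_irrefl {π : Fin n → ℕ} (a : Fin n) : ¬ ltk π a a := by
  rintro (h | ⟨_, h⟩) <;> exact absurd h (lt_irrefl _)

lemma ltk_total {π : Fin n → ℕ} {a b : Fin n} (h : a ≠ b) : ltk π a b ∨ ltk π b a := by
  rcases lt_trichotomy (π a) (π b) with h1 | h1 | h1
  · exact Or.inl (Or.inl h1)
  · rcases lt_trichotomy a b with h2 | h2 | h2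
    · exact Or.inl (Or.inr ⟨h1, h2⟩)
    · exact absurd h2 h
    · exact Or.inr (Or.inr ⟨h1.symm, h2⟩)
  · exact Or.inr (Or.inl h1)

open Classical in
/-- The set of class representatives. -/
def Reps (G : SimpleGraph (Fin n)) (π : Fin n → ℕ) : Finset (Fin n) :=
  Finset.univ.filter (fun u => frep G π u = u)

open Classical in
/-- Rank of a vertex among the representatives, ordered lexicographically. -/
def rnk (G : SimpleGraph (Fin n)) (π : Fin n → ℕ) (a : Fin n) : ℕ :=
  1 + ((Reps G π).filter (fun x => ltk π x a)).card

/-- The coarsest equitable refinement of `π`, as a colouring. -/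
def piPrime (G : SimpleGraph (Fin n)) (π : Fin n → ℕ) : Fin n → ℕ :=
  fun v => rnk G π (frep G π v)

lemma frep_mem_Reps (G : SimpleGraph (Fin n)) (π : Fin n → ℕ) (v : Fin n) :
    frep G π v ∈ Reps G π := by
  simp [Reps, frep_idem]

lemma rnk_lt_rnk {G : SimpleGraph (Fin n)} {π : Fin n → ℕ} {a b : Fin n}
    (ha : a ∈ Reps G π) (h : ltk π a b) : rnk G π a < rnk G π b := by
  classical
  have hss : (Reps G π).filter (fun x => ltk π x a) ⊂ (Reps G π).filter (fun x => ltk π x b) := by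
    refine Finset.ssubset_iff_of_subset ?_ |>.mpr ?_
    · intro x hx
      rw [Finset.mem_filter] at hx ⊢
      exact ⟨hx.1, ltk_trans hx.2 h⟩
    · exact ⟨a, Finset.mem_filter.mpr ⟨ha, h⟩, by simp [ltk_irrefl]⟩
  have := Finset.card_lt_card hss
  unfold rnk
  omega

lemma rnk_injOn {G : SimpleGraph (Fin n)} {π : Fin n → ℕ} {a b : Fin n}
    (ha : a ∈ Reps G π) (hb : b ∈ Reps G π) (h : rnk G π a = rnk G π b) : a = b := by
  by_contra hne
  rcases ltk_total (π := π) hne with h1 | h1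
  · exact absurd h (Nat.ne_of_lt (rnk_lt_rnk ha h1))
  · exact absurd h.symm (Nat.ne_of_lt (rnk_lt_rnk hb h1))

lemma piPrime_eq_iff {G : SimpleGraph (Fin n)} {π : Fin n → ℕ} {v w : Fin n} :
    piPrime G π v = piPrime G π w ↔ Rrel G π v w := by
  constructor
  · intro h
    exact R_of_frep_eq (rnk_injOn (frep_mem_Reps G π v) (frep_mem_Reps G π w) h)
  · intro h
    unfold piPrime
    rw [frep_eq_of_R h]

lemma finerC_piPrime (G : SimpleGraph (Fin n)) (π : Fin n → ℕ) : FinerC (piPrime G π) π := by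
  intro v w h
  have hv : π (frep G π v) = π v := (Rrel_pi_eq (frep_R G π v)).symm
  have hw : π (frep G π w) = π w := (Rrel_pi_eq (frep_R G π w)).symm
  exact rnk_lt_rnk (frep_mem_Reps G π v) (Or.inl (by rw [hv, hw]; exact h))

lemma rnk_mem_Icc {G : SimpleGraph (Fin n)} {π : Fin n → ℕ} {a : Fin n} (ha : a ∈ Reps G π) :
    rnk G π a ∈ Finset.Icc 1 (Reps G π).card := by
  classical
  rw [Finset.mem_Icc]
  refine ⟨by unfold rnk; omega, ?_⟩
  have hsub : (Reps G π).filter (fun x => ltk π x a) ⊆ (Reps G π).erase a := by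
    intro x hx
    rw [Finset.mem_filter] at hx
    refine Finset.mem_erase.mpr ⟨?_, hx.1⟩
    rintro rfl
    exact ltk_irrefl _ hx.2
  have h1 := Finset.card_le_card hsub
  have h2 := Finset.card_erase_of_mem ha
  have h3 : 1 ≤ (Reps G π).card := Finset.card_pos.mpr ⟨a, ha⟩
  unfold rnk
  omega

lemma isCol_piPrime (G : SimpleGraph (Fin n)) (π : Fin n → ℕ) : IsCol (piPrime G π) := by
  classical
  refine ⟨(Reps G π).card, ?_⟩
  have himg : (Reps G π).image (rnk G π) = Finset.Icc 1 (Reps G π).card := by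
    apply Finset.eq_of_subset_of_card_le
    · intro m hm
      rw [Finset.mem_image] at hm
      obtain ⟨a, ha, rfl⟩ := hm
      exact rnk_mem_Icc ha
    · rw [Nat.card_Icc]
      rw [Finset.card_image_of_injOn (fun a ha b hb h => rnk_injOn ha hb h)]
      omega
  ext m
  simp only [Set.mem_range, Set.mem_Icc]
  constructor
  · rintro ⟨v, rfl⟩
    have : piPrime G π v ∈ (Reps G π).image (rnk G π) :=
      Finset.mem_image.mpr ⟨frep G π v, frep_mem_Reps G π v, rfl⟩
    rw [himg, Finset.mem_Icc] at this
    exact this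
  · intro hm
    have : m ∈ (Reps G π).image (rnk G π) := by rw [himg, Finset.mem_Icc]; exact hm
    rw [Finset.mem_image] at this
    obtain ⟨a, ha, rfl⟩ := this
    refine ⟨a, ?_⟩
    unfold piPrime
    rw [show frep G π a = a from (Finset.mem_filter.mp ha).2]

lemma ncard_filter_eq (P : Fin n → Prop) [DecidablePred P] :
    {u | P u}.ncard = (Finset.univ.filter P).card := by
  rw [show {u | P u} = ↑(Finset.univ.filter P) by ext u; simp, Set.ncard_coe_finset]

lemma count_step {G : SimpleGraph (Fin n)} {σ : Fin n → ℕ} (hE : IsEquit G σ) {v w : Fin n}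
    (hvw : σ v = σ w) (C : Set (Fin n)) (hsat : ∀ a b, σ a = σ b → a ∈ C → b ∈ C) :
    {u | G.Adj v u ∧ u ∈ C}.ncard = {u | G.Adj w u ∧ u ∈ C}.ncard := by
  classical
  set T : Finset ℕ := (Finset.univ.filter (fun u => u ∈ C)).image σ with hT
  have key : ∀ x : Fin n, (Finset.univ.filter (fun u => G.Adj x u ∧ u ∈ C)) =
      T.biUnion (fun j => Finset.univ.filter (fun u => G.Adj x u ∧ σ u = j)) := by
    intro x; ext u
    simp only [Finset.mem_filter, Finset.mem_univ, true_and, Finset.mem_biUnion, hT,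
      Finset.mem_image]
    constructor
    · rintro ⟨ha, hc⟩
      exact ⟨σ u, ⟨u, by simp [hc], rfl⟩, ha, rfl⟩
    · rintro ⟨j, ⟨c, hc, hcj⟩, ha, hj⟩
      exact ⟨ha, hsat c u (by rw [hcj, hj]) hc⟩
  have disj : ∀ x : Fin n, ∀ j1 ∈ T, ∀ j2 ∈ T, j1 ≠ j2 →
      Disjoint (Finset.univ.filter (fun u => G.Adj x u ∧ σ u = j1))
        (Finset.univ.filter (fun u => G.Adj x u ∧ σ u = j2)) := by
    intro x j1 _ j2 _ hne
    rw [Finset.disjoint_left]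
    intro u hu1 hu2
    rw [Finset.mem_filter] at hu1 hu2
    exact hne (hu1.2.2 ▸ hu2.2.2)
  have main : ∀ x : Fin n, {u | G.Adj x u ∧ u ∈ C}.ncard =
      ∑ j ∈ T, {u | G.Adj x u ∧ σ u = j}.ncard := by
    intro x
    rw [ncard_filter_eq, key x, Finset.card_biUnion (disj x)]
    exact Finset.sum_congr rfl fun j _ => (ncard_filter_eq _).symm
  rw [main v, main w]
  exact Finset.sum_congr rfl fun j _ => hE v w hvw j

lemma count_R {G : SimpleGraph (Fin n)} {π : Fin n → ℕ} {v w : Fin n} (h : Rrel G π v w)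
    (C : Set (Fin n)) (hsat : ∀ a b, Rrel G π a b → a ∈ C → b ∈ C) :
    {u | G.Adj v u ∧ u ∈ C}.ncard = {u | G.Adj w u ∧ u ∈ C}.ncard := by
  induction h with
  | rel x y hxy =>
    obtain ⟨σ, hc, he, hf, hxy'⟩ := hxy
    exact count_step he hxy' C
      (fun a b hab => hsat a b (Relation.EqvGen.rel _ _ ⟨σ, hc, he, hf, hab⟩))
  | refl x => rfl
  | symm x y _ ih => exact ih.symm
  | trans x y z _ _ ih1 ih2 => exact ih1.trans ih2

lemma isEquit_piPrime (G : SimpleGraph (Fin n)) (π : Fin n → ℕ) : IsEquit G (piPrime G π) := by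
  intro v w hvw j
  have hR : Rrel G π v w := piPrime_eq_iff.mp hvw
  have := count_R hR {u | piPrime G π u = j}
    (fun a b hab ha => by
      simp only [Set.mem_setOf_eq] at ha ⊢
      rw [← piPrime_eq_iff.mpr hab]; exact ha)
  simpa using this

end Stmt15Aux

/-- Every colouring has a coarsest equitable refinement, unique up to the order of its cells. -/
theorem stmt15 {n : ℕ} (G : SimpleGraph (Fin n)) (π : Fin n → ℕ) (hπ : IsCol π) :
    ∃ π' : Fin n → ℕ, IsCol π' ∧ IsEquit G π' ∧ FinerC π' π ∧
      (∀ σ : Fin n → ℕ, IsCol σ → IsEquit G σ → FinerC σ π →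
        ∀ j : ℕ, (σ ⁻¹' {j}).Nonempty → ∃ i : ℕ, σ ⁻¹' {j} ⊆ π' ⁻¹' {i}) ∧
      (∀ π'' : Fin n → ℕ, IsCol π'' → IsEquit G π'' → FinerC π'' π →
        (∀ σ : Fin n → ℕ, IsCol σ → IsEquit G σ → FinerC σ π →
          ∀ j : ℕ, (σ ⁻¹' {j}).Nonempty → ∃ i : ℕ, σ ⁻¹' {j} ⊆ π'' ⁻¹' {i}) →
        ∀ v w, π'' v = π'' w ↔ π' v = π' w) := by
  refine ⟨piPrime G π, isCol_piPrime G π, isEquit_piPrime G π, finerC_piPrime G π, ?_, ?_⟩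
  · intro σ hc he hf j ⟨v, hv⟩
    simp only [Set.mem_preimage, Set.mem_singleton_iff] at hv
    refine ⟨piPrime G π v, fun w hw => ?_⟩
    simp only [Set.mem_preimage, Set.mem_singleton_iff] at hw ⊢
    exact piPrime_eq_iff.mpr
      (Relation.EqvGen.rel _ _ ⟨σ, hc, he, hf, by rw [hw, hv]⟩)
  · intro π'' hc he hf hmax v w
    constructor
    · intro h
      exact piPrime_eq_iff.mpr (Relation.EqvGen.rel _ _ ⟨π'', hc, he, hf, h⟩)
    · intro h
      obtain ⟨i, hi⟩ := hmax (piPrime G π) (isCol_piPrime G π) (isEquit_piPrime G π)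
        (finerC_piPrime G π) (piPrime G π v) ⟨v, rfl⟩
      have h1 : π'' v = i := hi rfl
      have h2 : π'' w = i := hi (show piPrime G π w = piPrime G π v from h.symm)
      rw [h1, h2]
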